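/- For n ≥ 2 and 0 ≤ p ≤ r−1: N_r(2^p) = n^p, and for every 0 ≤ i ≤ 2^p, N_r(2^p + i) = n^p + (n−1)·N_r(i). -/

import Mathlib

/-- Whether the `j`-th coordinate of the edge `e` equals the distinguished vertex
(the first vertex of its side, representing `v_{j+1} = 1`). -/
def vcond {n r : ℕ} (e : Fin r → Fin n) (j : ℕ) : Bool :=
  if h : j < r then decide ((e ⟨j, h⟩ : ℕ) = 0) else false

/-- The nested condition `v_{j+1} ∈ e σ₁ (v_{j+2} ∈ e σ₂ (⋯))` determined by a
sequence `σ` over `{∧, ∨}` (where `false` encodes `∧` and `true` encodes `∨`). -/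
def edgeCond {n r : ℕ} (e : Fin r → Fin n) : ℕ → List Bool → Bool
  | j, [] => vcond e j
  | j, false :: s => vcond e j && edgeCond e (j + 1) s
  | j, true :: s => vcond e j || edgeCond e (j + 1) s

/-- `F_r(σ)`: the set of edges of `[n]^r` satisfying the nested condition given by `σ`. -/
def Fset (n r : ℕ) (σ : List Bool) : Finset (Fin r → Fin n) :=
  Finset.univ.filter (fun e => edgeCond e 0 σ = true)

/-- `f_r(σ) = |F_r(σ)|`. -/
def fval (n r : ℕ) (σ : List Bool) : ℕ := (Fset n r σ).card

/-- `Ψ_r`: the sequences over `{∧, ∨}` of length at most `r - 1`. -/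
def PsiSet (r : ℕ) : Finset (List Bool) :=
  (Finset.range r).biUnion (fun m => (Finset.univ : Finset (Fin m → Bool)).image List.ofFn)

/-- The set of values `{f_r(σ) : σ ∈ Σ_r}`, where `f_r(α) = 0` and `f_r(ω) = n ^ r`. -/
def Nvals (n r : ℕ) : Finset ℕ :=
  insert 0 (insert (n ^ r) ((PsiSet r).image (fval n r)))

/-- `N_r(i)`: the `(i+1)`-st smallest element of `{f_r(σ) : σ ∈ Σ_r}`. -/
def Nseq (n r i : ℕ) : ℕ := (Finset.sort (Nvals n r) (· ≤ ·)).getD i 0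

def phi (n : ℕ) : ℕ → ℕ
  | 0 => 0
  | (i+1) => n ^ (Nat.log 2 (i+1)) + (n - 1) * phi n (i + 1 - 2 ^ (Nat.log 2 (i+1)))
decreasing_by
  have : 0 < 2 ^ (Nat.log 2 (i+1)) := Nat.pow_pos (by norm_num)
  omega

lemma phi_add {n p i : ℕ} (h : i < 2 ^ p) :
    phi n (2 ^ p + i) = n ^ p + (n - 1) * phi n i := by
  have h1 : 2 ^ p + i = (2 ^ p + i - 1) + 1 := by
    have : 0 < 2 ^ p := Nat.pow_pos (by norm_num)
    omega
  have hlog : Nat.log 2 (2 ^ p + i) = p :=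
    Nat.log_eq_of_pow_le_of_lt_pow (by omega) (by rw [pow_succ]; omega)
  rw [h1, phi, ← h1, hlog, Nat.add_sub_cancel_left]

lemma phi_pow (n p : ℕ) : phi n (2 ^ p) = n ^ p := by
  have := phi_add (n := n) (p := p) (i := 0) (Nat.pow_pos (by norm_num))
  simpa [phi] using this

lemma phi_lt_pow {n : ℕ} (hn : 2 ≤ n) : ∀ i p, i < 2 ^ p → phi n i < n ^ p := by
  intro i
  induction i using Nat.strong_induction_on with
  | _ i IH =>
    intro p hip
    match i, hip with
    | 0, hip => simpa [phi] using (Nat.pow_pos (by omega) : 0 < n ^ p)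
    | (m+1), hip =>
      set q := Nat.log 2 (m+1) with hq
      have hle : 2 ^ q ≤ m + 1 := Nat.pow_log_le_self 2 (by omega)
      have hlt : m + 1 < 2 ^ (q+1) := Nat.lt_pow_succ_log_self (by norm_num) _
      have hqp : q < p := by
        by_contra hc
        have : 2 ^ p ≤ 2 ^ q := Nat.pow_le_pow_right (by norm_num) (by omega)
        omega
      have h2q : 0 < 2 ^ q := Nat.pow_pos (by norm_num)
      have hrem : m + 1 - 2 ^ q < 2 ^ q := by
        rw [pow_succ] at hlt; omega
      have hIH : phi n (m + 1 - 2 ^ q) < n ^ q := IH _ (by omega) q hrem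
      have heq : phi n (m+1) = n ^ q + (n-1) * phi n (m + 1 - 2 ^ q) := by
        rw [phi]
      rw [heq]
      have hnq : 1 ≤ n ^ q := Nat.one_le_pow _ _ (by omega)
      calc n ^ q + (n-1) * phi n (m + 1 - 2 ^ q)
          ≤ n ^ q + (n-1) * (n ^ q - 1) := by
            have : phi n (m+1-2^q) ≤ n ^ q - 1 := by omega
            exact Nat.add_le_add_left (Nat.mul_le_mul_left _ this) _
        _ < n ^ (q+1) := by
            rw [pow_succ]
            zify [hnq, show 1 ≤ n by omega]
            nlinarith
        _ ≤ n ^ p := Nat.pow_le_pow_right (by omega) hqp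

lemma phi_le_pow {n : ℕ} (hn : 2 ≤ n) {i p : ℕ} (h : i ≤ 2 ^ p) : phi n i ≤ n ^ p := by
  rcases eq_or_lt_of_le h with h | h
  · rw [h, phi_pow]
  · exact (phi_lt_pow hn i p h).le

lemma phi_strictMono {n : ℕ} (hn : 2 ≤ n) : StrictMono (phi n) := by
  intro i j hij
  induction j using Nat.strong_induction_on generalizing i with
  | _ j IH =>
    match j, hij with
    | (m+1), hij =>
      set p := Nat.log 2 (m+1) with hp
      have hle : 2 ^ p ≤ m + 1 := Nat.pow_log_le_self 2 (by omega)
      have hlt : m + 1 < 2 ^ (p+1) := Nat.lt_pow_succ_log_self (by norm_num) _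
      have h2p : 0 < 2 ^ p := Nat.pow_pos (by norm_num)
      have hrem : m + 1 - 2 ^ p < 2 ^ p := by rw [pow_succ] at hlt; omega
      have hj : phi n (m+1) = n ^ p + (n-1) * phi n (m + 1 - 2 ^ p) := by rw [phi]
      rw [hj]
      by_cases hi : i < 2 ^ p
      · have := phi_lt_pow hn i p hi
        omega
      · push_neg at hi
        have hi2 : i - 2 ^ p < 2 ^ p := by omega
        have hieq : phi n i = n ^ p + (n-1) * phi n (i - 2 ^ p) := by
          have h3 : i = 2 ^ p + (i - 2 ^ p) := by omega
          nth_rewrite 1 [h3]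
          rw [phi_add hi2]
        have hlt2 : phi n (i - 2 ^ p) < phi n (m + 1 - 2 ^ p) :=
          IH (m + 1 - 2 ^ p) (by omega) (by omega)
        rw [hieq]
        have := Nat.mul_lt_mul_of_pos_left hlt2 (show 0 < n - 1 by omega)
        omega

lemma vcond_tail {n r : ℕ} (e : Fin (r+1) → Fin n) (j : ℕ) :
    vcond (Fin.tail e) j = vcond e (j+1) := by
  unfold vcond
  by_cases h : j < r
  · rw [dif_pos h, dif_pos (by omega : j + 1 < r + 1)]
    rfl
  · rw [dif_neg h, dif_neg (by omega)]

lemma edgeCond_tail {n r : ℕ} (e : Fin (r+1) → Fin n) :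
    ∀ (s : List Bool) (j : ℕ), edgeCond (Fin.tail e) j s = edgeCond e (j+1) s := by
  intro s
  induction s with
  | nil => intro j; simp [edgeCond, vcond_tail]
  | cons b t ih =>
    intro j
    cases b <;> simp [edgeCond, vcond_tail, ih]

-- cons/tail equiv cardinality transfer
lemma card_filter_cons {n r : ℕ} (P : (Fin (r+1) → Fin n) → Bool) :
    (Finset.univ.filter fun e => P e = true).card =
    (Finset.univ.filter fun z : Fin n × (Fin r → Fin n) => P (Fin.cons z.1 z.2) = true).card := by
  apply Finset.card_nbij' (i := fun e => (e 0, Fin.tail e)) (j := fun z => Fin.cons z.1 z.2)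
  · intro e he
    simp only [Finset.mem_coe, Finset.mem_filter, Finset.mem_univ, true_and] at he ⊢
    rwa [Fin.cons_self_tail]
  · intro z hz
    simp only [Finset.mem_coe, Finset.mem_filter, Finset.mem_univ, true_and] at hz ⊢
    exact hz
  · intro e _
    simp [Fin.cons_self_tail]
  · intro z _
    simp

def Ccnt (n : ℕ) : List Bool → ℕ
  | [] => 1
  | false :: s => Ccnt n s
  | true :: s => n ^ (s.length + 1) + (n - 1) * Ccnt n s

lemma card_zero_fin {n : ℕ} (hn : 1 ≤ n) :
    (Finset.univ.filter fun x : Fin n => ((x : ℕ) = 0)).card = 1 := by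
  have : (Finset.univ.filter fun x : Fin n => ((x : ℕ) = 0)) = {⟨0, by omega⟩} := by
    ext x
    simp [Fin.ext_iff]
  rw [this, Finset.card_singleton]

lemma card_filter_edgeCond {n : ℕ} (hn : 1 ≤ n) :
    ∀ (σ : List Bool) (r : ℕ), σ.length < r →
      (Finset.univ.filter fun e : Fin r → Fin n => edgeCond e 0 σ = true).card
        = Ccnt n σ * n ^ (r - 1 - σ.length) := by
  intro σ
  induction σ with
  | nil =>
    intro r hr
    obtain ⟨r', rfl⟩ : ∃ r', r = r' + 1 := ⟨r - 1, by omega⟩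
    rw [card_filter_cons]
    have h1 : (Finset.univ.filter fun z : Fin n × (Fin r' → Fin n) =>
        edgeCond (Fin.cons z.1 z.2) 0 [] = true)
        = (Finset.univ.filter fun x : Fin n => ((x : ℕ) = 0)) ×ˢ
            (Finset.univ : Finset (Fin r' → Fin n)) := by
      ext ⟨x, g⟩
      simp [Finset.mem_product, edgeCond, vcond, Fin.mk_zero]
    rw [h1, Finset.card_product, card_zero_fin hn]
    simp [Ccnt, Fintype.card_fun]
  | cons b s IH =>
    intro r hr
    obtain ⟨r', rfl⟩ : ∃ r', r = r' + 1 := ⟨r - 1, by omega⟩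
    have hs : s.length < r' := by simpa using hr
    rw [card_filter_cons]
    cases b with
    | false =>
      have h1 : (Finset.univ.filter fun z : Fin n × (Fin r' → Fin n) =>
          edgeCond (Fin.cons z.1 z.2) 0 (false :: s) = true)
          = (Finset.univ.filter fun x : Fin n => ((x : ℕ) = 0)) ×ˢ
              (Finset.univ.filter fun g : Fin r' → Fin n => edgeCond g 0 s = true) := by
        ext ⟨x, g⟩
        have ht := edgeCond_tail (Fin.cons x g) s 0
        rw [Fin.tail_cons] at ht
        simp [Finset.mem_product, edgeCond, ← ht, vcond, Fin.mk_zero]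
      rw [h1, Finset.card_product, card_zero_fin hn, IH r' hs]
      have h2 : r' + 1 - 1 - (false :: s).length = r' - 1 - s.length := by
        simp; omega
      rw [h2]
      simp [Ccnt]
    | true =>
      have hcq : (Finset.univ.filter fun g : Fin r' → Fin n => edgeCond g 0 s = true).card
          = Ccnt n s * n ^ (r' - 1 - s.length) := IH r' hs
      set A := (Finset.univ.filter fun g : Fin r' → Fin n => edgeCond g 0 s = true).card with hA
      have hcqle : A ≤ n ^ r' := by
        calc A ≤ (Finset.univ : Finset (Fin r' → Fin n)).card := Finset.card_filter_le _ _
          _ = n ^ r' := by simp [Fintype.card_fun]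
      have hsplit :
          ((Finset.univ : Finset (Fin n × (Fin r' → Fin n))).filter fun z =>
              edgeCond (Fin.cons z.1 z.2) 0 (true :: s) = true).card
          + ((Finset.univ : Finset (Fin n × (Fin r' → Fin n))).filter fun z =>
              ¬(edgeCond (Fin.cons z.1 z.2) 0 (true :: s) = true)).card
          = n * n ^ r' := by
        rw [Finset.card_filter_add_card_filter_not]
        simp [Fintype.card_fun]
      have hneg : ((Finset.univ : Finset (Fin n × (Fin r' → Fin n))).filter fun z =>
              ¬(edgeCond (Fin.cons z.1 z.2) 0 (true :: s) = true)).card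
          = (n - 1) * (n ^ r' - A) := by
        have h2 : ((Finset.univ : Finset (Fin n × (Fin r' → Fin n))).filter fun z =>
              ¬(edgeCond (Fin.cons z.1 z.2) 0 (true :: s) = true))
            = (Finset.univ.filter fun x : Fin n => ¬((x : ℕ) = 0)) ×ˢ
                (Finset.univ.filter fun g : Fin r' → Fin n => ¬(edgeCond g 0 s = true)) := by
          ext ⟨x, g⟩
          have ht := edgeCond_tail (Fin.cons x g) s 0
          rw [Fin.tail_cons] at ht
          simp [Finset.mem_product, edgeCond, ← ht, vcond, Fin.mk_zero]
        rw [h2, Finset.card_product]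
        congr 1
        · have h3 : (Finset.univ.filter fun x : Fin n => ¬((x : ℕ) = 0))
              = Finset.univ \ (Finset.univ.filter fun x : Fin n => ((x : ℕ) = 0)) := by
            rw [← Finset.filter_not]
          rw [h3, Finset.card_sdiff_of_subset (Finset.filter_subset _ _), card_zero_fin hn]
          simp
        · have h3 : (Finset.univ.filter fun g : Fin r' → Fin n => ¬(edgeCond g 0 s = true))
              = Finset.univ \ (Finset.univ.filter fun g : Fin r' → Fin n => edgeCond g 0 s = true) := by
            rw [← Finset.filter_not]
          rw [h3, Finset.card_sdiff_of_subset (Finset.filter_subset _ _), ← hA]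
          simp [Fintype.card_fun]
      have hpow : n ^ (s.length + 1) * n ^ (r' - 1 - s.length) = n ^ r' := by
        rw [← pow_add]
        congr 1
        omega
      have hgoal : Ccnt n (true :: s) * n ^ (r' + 1 - 1 - (true :: s).length)
          = n ^ r' + (n - 1) * A := by
        simp only [Ccnt, List.length_cons]
        have h4 : r' + 1 - 1 - (s.length + 1) = r' - 1 - s.length := by omega
        rw [h4, add_mul, hpow, mul_assoc, hcq]
      rw [hgoal]
      have h5 : (n - 1) * (n ^ r' - A) ≤ n * n ^ r' :=
        Nat.mul_le_mul (by omega) (by omega)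
      have hfinal : n * n ^ r' - (n - 1) * (n ^ r' - A) = n ^ r' + (n - 1) * A := by
        zify [h5, hcqle, hn]
        ring
      omega

lemma mem_PsiSet {r : ℕ} {σ : List Bool} : σ ∈ PsiSet r ↔ σ.length < r := by
  simp only [PsiSet, Finset.mem_biUnion, Finset.mem_range, Finset.mem_image, Finset.mem_univ,
    true_and]
  constructor
  · rintro ⟨m, hm, f, rfl⟩
    simpa using hm
  · intro h
    exact ⟨σ.length, h, σ.get, List.ofFn_get σ⟩

def enc : ℕ → List Bool → ℕ
  | r, [] => 2 ^ (r - 1)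
  | r, false :: s => enc (r - 1) s
  | r, true :: s => 2 ^ (r - 1) + enc (r - 1) s

lemma enc_bounds : ∀ (σ : List Bool) (r : ℕ), σ.length < r →
    1 ≤ enc r σ ∧ enc r σ ≤ 2 ^ r - 1 := by
  intro σ
  induction σ with
  | nil =>
    intro r hr
    have h1 : 1 ≤ 2 ^ (r - 1) := Nat.one_le_two_pow
    have h2 : 2 ^ (r - 1) ≤ 2 ^ r - 1 := by
      obtain ⟨t, rfl⟩ : ∃ t, r = t + 1 := ⟨r - 1, by omega⟩
      simp [pow_succ]
      have : 1 ≤ 2 ^ t := Nat.one_le_two_pow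
      omega
    exact ⟨h1, h2⟩
  | cons b s IH =>
    intro r hr
    have hs : s.length < r - 1 := by simp at hr; omega
    obtain ⟨h1, h2⟩ := IH (r - 1) hs
    have hr1 : 2 * 2 ^ (r - 1) = 2 ^ r := by
      obtain ⟨t, rfl⟩ : ∃ t, r = t + 1 := ⟨r - 1, by omega⟩
      simp [pow_succ, mul_comm]
    cases b <;> simp [enc] <;> omega

lemma enc_surj : ∀ (r k : ℕ), 1 ≤ k → k ≤ 2 ^ r - 1 →
    ∃ σ : List Bool, σ.length < r ∧ enc r σ = k := by
  intro r
  induction r with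
  | zero => intro k h1 h2; simp at h2; omega
  | succ r IH =>
    intro k h1 h2
    have hr1 : 2 ^ (r + 1) = 2 * 2 ^ r := by rw [pow_succ, mul_comm]
    rcases lt_trichotomy k (2 ^ r) with h | h | h
    · obtain ⟨s, hs1, hs2⟩ := IH k h1 (by omega)
      exact ⟨false :: s, by simpa using hs1, by simpa [enc] using hs2⟩
    · exact ⟨[], by simp, by simp [enc, h]⟩
    · obtain ⟨s, hs1, hs2⟩ := IH (k - 2 ^ r) (by omega) (by omega)
      refine ⟨true :: s, by simpa using hs1, ?_⟩
      simp only [enc, Nat.add_sub_cancel]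
      have : 1 ≤ 2 ^ r := Nat.one_le_two_pow
      omega

lemma fval_eq_phi {n : ℕ} (hn : 2 ≤ n) :
    ∀ (σ : List Bool) (r : ℕ), σ.length < r → fval n r σ = phi n (enc r σ) := by
  have key : ∀ (σ : List Bool) (r : ℕ), σ.length < r →
      Ccnt n σ * n ^ (r - 1 - σ.length) = phi n (enc r σ) := by
    intro σ
    induction σ with
    | nil =>
      intro r hr
      simp [Ccnt, enc, phi_pow]
    | cons b s IH =>
      intro r hr
      have hs : s.length < r - 1 := by simp at hr; omega
      have hIH := IH (r - 1) hs
      cases b with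
      | false =>
        have : r - 1 - (false :: s).length = (r - 1) - 1 - s.length := by
          simp; omega
        simp only [Ccnt, enc, this]
        exact hIH
      | true =>
        have hb := enc_bounds s (r - 1) hs
        have hlt : enc (r - 1) s < 2 ^ (r - 1) := by
          have : 1 ≤ 2 ^ (r-1) := Nat.one_le_two_pow
          omega
        rw [show enc r (true :: s) = 2 ^ (r-1) + enc (r-1) s from rfl,
          phi_add hlt, ← hIH]
        have hexp : r - 1 - (true :: s).length = (r - 1) - 1 - s.length := by
          simp; omega
        have hpow : n ^ (s.length + 1) * n ^ ((r - 1) - 1 - s.length) = n ^ (r - 1) := by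
          rw [← pow_add]; congr 1; omega
        simp only [Ccnt, hexp, add_mul, hpow, mul_assoc]
  intro σ r hr
  rw [fval, Fset, card_filter_edgeCond (by omega) σ r hr]
  exact key σ r hr
lemma Nvals_eq {n r : ℕ} (hn : 2 ≤ n) (hr : 1 ≤ r) :
    Nvals n r = (Finset.range (2 ^ r + 1)).image (phi n) := by
  ext a
  simp only [Nvals, Finset.mem_insert, Finset.mem_image, Finset.mem_range]
  constructor
  · rintro (rfl | rfl | ⟨σ, hσ, rfl⟩)
    · exact ⟨0, by positivity, by simp [phi]⟩
    · exact ⟨2 ^ r, by omega, phi_pow n r⟩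
    · rw [mem_PsiSet] at hσ
      obtain ⟨h1, h2⟩ := enc_bounds σ r hσ
      exact ⟨enc r σ, by omega, (fval_eq_phi hn σ r hσ).symm⟩
  · rintro ⟨k, hk, rfl⟩
    rcases Nat.eq_zero_or_pos k with rfl | hk1
    · left; simp [phi]
    rcases eq_or_lt_of_le (show k ≤ 2 ^ r by omega) with h | h
    · right; left; rw [h, phi_pow]
    · right; right
      obtain ⟨σ, hσ1, hσ2⟩ := enc_surj r k hk1 (by omega)
      exact ⟨σ, mem_PsiSet.2 hσ1, by rw [fval_eq_phi hn σ r hσ1, hσ2]⟩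

lemma sort_Nvals {n r : ℕ} (hn : 2 ≤ n) (hr : 1 ≤ r) :
    Finset.sort (Nvals n r) (· ≤ ·) = (List.range (2 ^ r + 1)).map (phi n) := by
  have hsortedR : ((List.range (2 ^ r + 1)).map (phi n)).Pairwise (· < ·) := by
    rw [List.pairwise_map]
    exact (List.pairwise_lt_range (n := 2 ^ r + 1)).imp (fun h => phi_strictMono hn h)
  refine List.Perm.eq_of_pairwise' (Finset.pairwise_sort _ _) (hsortedR.imp le_of_lt) ?_
  rw [List.perm_ext_iff_of_nodup (Finset.sort_nodup _ _) hsortedR.nodup]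
  intro a
  rw [Finset.mem_sort, Nvals_eq hn hr]
  simp [Finset.mem_image]

lemma Nseq_eq_phi {n r i : ℕ} (hn : 2 ≤ n) (hr : 1 ≤ r) (hi : i ≤ 2 ^ r) :
    Nseq n r i = phi n i := by
  rw [Nseq, sort_Nvals hn hr]
  have hlen : i < ((List.range (2 ^ r + 1)).map (phi n)).length := by
    simp; omega
  rw [List.getD_eq_getElem _ _ hlen]
  simp

theorem stmt4 (n r p i : ℕ) (hn : 2 ≤ n) (hp : p < r) (hi : i ≤ 2 ^ p) :
    Nseq n r (2 ^ p) = n ^ p ∧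
    Nseq n r (2 ^ p + i) = n ^ p + (n - 1) * Nseq n r i := by
  have hr : 1 ≤ r := by omega
  have hpr : 2 ^ (p + 1) ≤ 2 ^ r := Nat.pow_le_pow_right (by norm_num) (by omega)
  have hpp : 2 ^ p ≤ 2 ^ r := Nat.pow_le_pow_right (by norm_num) (by omega)
  have h2p : 2 * 2 ^ p = 2 ^ (p + 1) := by rw [pow_succ, mul_comm]
  constructor
  · rw [Nseq_eq_phi hn hr hpp, phi_pow]
  · rw [Nseq_eq_phi hn hr (by omega), Nseq_eq_phi hn hr (by omega)]
    rcases eq_or_lt_of_le hi with rfl | h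
    · rw [show 2 ^ p + 2 ^ p = 2 ^ (p+1) by omega, phi_pow, phi_pow, pow_succ]
      have : 1 ≤ n ^ p := Nat.one_le_pow _ _ (by omega)
      have := Nat.succ_le_of_lt (show 0 < n ^ p by omega)
      zify [show 1 ≤ n by omega]
      ring
    · exact phi_add h
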